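/- Let μ be a probability measure on ℝ and r ∈ (0,1] with m_r = ∫|x|^r dμ(x) < ∞. If Σ_{j=1}^p (b_j^r + a_j^{r/2}·m_r) < 1, then there exist weights γ ∈ (0,∞)^p, ρ ∈ (0,1) and C ≥ 0 such that for every y ∈ ℝ^p and each i ∈ {1,2}: ∫ V_{γ,r}(N_i(y,x)) dμ(x) ≤ ρ·V_{γ,r}(y) + C. -/

import Mathlib

open MeasureTheory


private lemma rpow_add_le_add_rpow' {x y q : ℝ} (hx : 0 ≤ x) (hy : 0 ≤ y)
    (hq0 : 0 ≤ q) (hq1 : q ≤ 1) : (x + y) ^ q ≤ x ^ q + y ^ q := by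
  have h := NNReal.rpow_add_le_add_rpow x.toNNReal y.toNNReal hq0 hq1
  rw [← Real.toNNReal_add hx hy] at h
  have h2 := NNReal.coe_le_coe.2 h
  rwa [NNReal.coe_rpow, NNReal.coe_add, NNReal.coe_rpow, NNReal.coe_rpow,
    Real.coe_toNNReal _ (add_nonneg hx hy), Real.coe_toNNReal _ hx, Real.coe_toNNReal _ hy] at h2

private lemma sum_rpow_le' {ι : Type*} (s : Finset ι) (f : ι → ℝ) {q : ℝ}
    (hq0 : 0 < q) (hq1 : q ≤ 1) (hf : ∀ i ∈ s, 0 ≤ f i) :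
    (∑ i ∈ s, f i) ^ q ≤ ∑ i ∈ s, f i ^ q := by
  induction s using Finset.cons_induction with
  | empty => simp [Real.zero_rpow hq0.ne']
  | cons a s ha ih =>
    rw [Finset.sum_cons, Finset.sum_cons]
    have h1 : 0 ≤ f a := hf a (Finset.mem_cons_self a s)
    have h2 : ∀ i ∈ s, 0 ≤ f i := fun i hi => hf i (Finset.mem_cons_of_mem hi)
    calc (f a + ∑ i ∈ s, f i) ^ q ≤ f a ^ q + (∑ i ∈ s, f i) ^ q :=
          rpow_add_le_add_rpow' h1 (Finset.sum_nonneg h2) hq0.le hq1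
      _ ≤ _ := add_le_add_right (ih h2) _

private lemma abs_add_rpow_le' {x y q : ℝ} (hq0 : 0 < q) (hq1 : q ≤ 1) :
    |x + y| ^ q ≤ |x| ^ q + |y| ^ q :=
  le_trans (Real.rpow_le_rpow (abs_nonneg _) (abs_add_le x y) hq0.le)
    (rpow_add_le_add_rpow' (abs_nonneg x) (abs_nonneg y) hq0.le hq1)

private lemma abs_sum_rpow_le' {ι : Type*} (s : Finset ι) (f : ι → ℝ) {q : ℝ}
    (hq0 : 0 < q) (hq1 : q ≤ 1) :
    |∑ i ∈ s, f i| ^ q ≤ ∑ i ∈ s, |f i| ^ q :=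
  le_trans (Real.rpow_le_rpow (abs_nonneg _) (Finset.abs_sum_le_sum_abs f s) hq0.le)
    (sum_rpow_le' s (fun i => |f i|) hq0 hq1 (fun i _ => abs_nonneg _))

/-- The next lag-vector of the BDAR recursion: first coordinate
`φ₀ + ∑ⱼ φⱼ yⱼ + x √(α₀ + ∑ⱼ αⱼ yⱼ²)`, remaining coordinates shifted from `y`. -/
noncomputable def nextLag (p : ℕ) (φ0 : ℝ) (φ : Fin p → ℝ) (α0 : ℝ) (α : Fin p → ℝ)
    (y : Fin p → ℝ) (x : ℝ) : Fin p → ℝ :=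
  fun k =>
    if _ : (k : ℕ) = 0 then
      φ0 + (∑ j, φ j * y j) + x * Real.sqrt (α0 + ∑ j, α j * y j ^ 2)
    else y ⟨(k : ℕ) - 1, by have := k.isLt; omega⟩

/-- The drift test function `V_{γ,r}(y) = 1 + ∑ₖ γₖ |yₖ|^r`. -/
noncomputable def testV (p : ℕ) (γ : Fin p → ℝ) (r : ℝ) (y : Fin p → ℝ) : ℝ :=
  1 + ∑ k, γ k * |y k| ^ r

set_option maxHeartbeats 2000000 in
/-- Drift condition for the BDAR model, case `r ∈ (0,1]`: if
`∑ⱼ (bⱼ^r + aⱼ^{r/2} m_r) < 1` then there are weights `γ`, `ρ ∈ (0,1)` and `C ≥ 0` with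
`∫ V_{γ,r}(N_i(y,x)) dμ(x) ≤ ρ V_{γ,r}(y) + C` for all `y` and both regimes. -/
theorem bdar_drift_condition_small_r (p : ℕ) (hp : 1 ≤ p)
    (φ0 : Fin 2 → ℝ) (φ : Fin 2 → Fin p → ℝ)
    (α0 : Fin 2 → ℝ) (α : Fin 2 → Fin p → ℝ)
    (hα0 : ∀ i, 0 < α0 i) (hα : ∀ i j, 0 ≤ α i j)
    (μ : Measure ℝ) [IsProbabilityMeasure μ]
    (r : ℝ) (hr : r ∈ Set.Ioc (0 : ℝ) 1)
    (hmr : Integrable (fun x => |x| ^ r) μ)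
    (hcond : ∑ j, ((max |φ 0 j| |φ 1 j|) ^ r
        + (max (α 0 j) (α 1 j)) ^ (r / 2) * ∫ x, |x| ^ r ∂μ) < 1) :
    ∃ γ : Fin p → ℝ, (∀ k, 0 < γ k) ∧
      ∃ ρ : ℝ, ρ ∈ Set.Ioo (0 : ℝ) 1 ∧ ∃ C : ℝ, 0 ≤ C ∧
        ∀ y : Fin p → ℝ, ∀ i : Fin 2,
          ∫ x, testV p γ r (nextLag p (φ0 i) (φ i) (α0 i) (α i) y x) ∂μ
            ≤ ρ * testV p γ r y + C := by
  obtain ⟨hr0, hr1⟩ := hr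
  obtain ⟨n, rfl⟩ : ∃ n, p = n + 1 := ⟨p - 1, by omega⟩
  set m : ℝ := ∫ x, |x| ^ r ∂μ with hm_def
  have hm0 : 0 ≤ m := integral_nonneg fun x => Real.rpow_nonneg (abs_nonneg x) r
  set cN : ℕ → ℝ := fun k => if h : k < n + 1 then
      (max |φ 0 ⟨k, h⟩| |φ 1 ⟨k, h⟩|) ^ r + (max (α 0 ⟨k, h⟩) (α 1 ⟨k, h⟩)) ^ (r / 2) * m
    else 0 with hcN_def

  have hcN0 : ∀ k, 0 ≤ cN k := by
    intro k
    rw [hcN_def]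
    dsimp only
    split
    · exact add_nonneg (Real.rpow_nonneg (le_max_of_le_left (abs_nonneg _)) r)
        (mul_nonneg (Real.rpow_nonneg (le_trans (hα 0 _) (le_max_left _ _)) _) hm0)
    · exact le_refl 0
  set S : ℝ := ∑ k ∈ Finset.range (n + 1), cN k with hS_def
  have hS_eq : S = ∑ j : Fin (n + 1), ((max |φ 0 j| |φ 1 j|) ^ r + (max (α 0 j) (α 1 j)) ^ (r / 2) * m) := by
    rw [hS_def, ← Fin.sum_univ_eq_sum_range]
    refine Finset.sum_congr rfl fun j _ => ?_
    rw [hcN_def]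
    dsimp only
    rw [dif_pos j.isLt]
  have hS1 : S < 1 := by rw [hS_eq]; exact hcond
  have hS0 : 0 ≤ S := Finset.sum_nonneg fun k _ => hcN0 k
  have h1S : (0:ℝ) < 1 + S := by linarith
  set t : ℝ := max (2 * S / (1 + S)) (1 / 2) with ht_def
  have ht_pos : 0 < t := lt_of_lt_of_le (by norm_num) (le_max_right _ _)
  have ht_lt : t < 1 := by
    apply max_lt _ (by norm_num)
    rw [div_lt_one h1S]
    linarith
  set ρ : ℝ := t ^ (((n + 1 : ℕ) : ℝ))⁻¹ with hρ_def
  have hρ_pos : 0 < ρ := Real.rpow_pos_of_pos ht_pos _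
  have hρ_lt : ρ < 1 := Real.rpow_lt_one ht_pos.le ht_lt (by positivity)
  have hρ_pow : ρ ^ (n + 1) = t := by
    rw [hρ_def, ← Real.rpow_natCast (t ^ (((n + 1 : ℕ) : ℝ))⁻¹) (n + 1),
      ← Real.rpow_mul ht_pos.le, inv_mul_cancel₀ (by positivity), Real.rpow_one]
  set ε : ℝ := (1 - S) / 2 with hε_def
  have hε_pos : 0 < ε := by rw [hε_def]; linarith
  have hkey : S ≤ (1 - ε) * ρ ^ (n + 1) := by
    rw [hρ_pow]
    have h2 : 2 * S / (1 + S) ≤ t := le_max_left _ _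
    have h3 : (1 + S) / 2 * (2 * S / (1 + S)) = S := by field_simp
    calc S = (1 + S) / 2 * (2 * S / (1 + S)) := h3.symm
      _ ≤ (1 + S) / 2 * t := mul_le_mul_of_nonneg_left h2 (by linarith)
      _ = (1 - ε) * t := by rw [hε_def]; ring
  set γN : ℕ → ℝ := fun j => ρ ^ j * (ε * ρ ^ (n + 1) + ∑ k ∈ Finset.Ico j (n + 1), cN k * ρ ^ (n - k)) with hγ_def
  have hγpos : ∀ j, 0 < γN j := by
    intro j
    rw [hγ_def]
    exact mul_pos (pow_pos hρ_pos j) (add_pos_of_pos_of_nonneg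
      (mul_pos hε_pos (pow_pos hρ_pos _))
      (Finset.sum_nonneg fun k _ => mul_nonneg (hcN0 k) (pow_nonneg hρ_pos.le _)))
  have hγ0le : γN 0 ≤ ρ ^ (n + 1) := by
    have hsum_le : ∑ k ∈ Finset.Ico 0 (n + 1), cN k * ρ ^ (n - k) ≤ S := by
      rw [hS_def, Finset.range_eq_Ico]
      refine Finset.sum_le_sum fun k _ => ?_
      calc cN k * ρ ^ (n - k) ≤ cN k * 1 :=
            mul_le_mul_of_nonneg_left (pow_le_one₀ hρ_pos.le hρ_lt.le) (hcN0 k)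
        _ = cN k := mul_one _
    have : γN 0 = ε * ρ ^ (n + 1) + ∑ k ∈ Finset.Ico 0 (n + 1), cN k * ρ ^ (n - k) := by
      rw [hγ_def]; ring
    rw [this]
    nlinarith [pow_pos hρ_pos (n + 1)]
  have hrec : ∀ j, j ≤ n → ρ * γN j = γN (j + 1) + cN j * ρ ^ (n + 1) := by
    intro j hj
    have hsplit : ∑ k ∈ Finset.Ico j (n + 1), cN k * ρ ^ (n - k)
        = cN j * ρ ^ (n - j) + ∑ k ∈ Finset.Ico (j + 1) (n + 1), cN k * ρ ^ (n - k) :=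
      Finset.sum_eq_sum_Ico_succ_bot (by omega) _
    have hpow : ρ ^ (j + 1) * ρ ^ (n - j) = ρ ^ (n + 1) := by
      rw [← pow_add]; congr 1; omega
    rw [hγ_def]
    dsimp only
    rw [hsplit]
    calc ρ * (ρ ^ j * (ε * ρ ^ (n + 1) + (cN j * ρ ^ (n - j) + ∑ k ∈ Finset.Ico (j + 1) (n + 1), cN k * ρ ^ (n - k))))
        = ρ ^ (j + 1) * (ε * ρ ^ (n + 1) + ∑ k ∈ Finset.Ico (j + 1) (n + 1), cN k * ρ ^ (n - k))
          + cN j * (ρ ^ (j + 1) * ρ ^ (n - j)) := by ring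
      _ = _ := by rw [hpow]
  have hcoef1 : ∀ j, j ≤ n → γN 0 * cN j + γN (j + 1) ≤ ρ * γN j := by
    intro j hj
    rw [hrec j hj]
    have : γN 0 * cN j ≤ cN j * ρ ^ (n + 1) := by
      rw [mul_comm]
      exact mul_le_mul_of_nonneg_left hγ0le (hcN0 j)
    linarith
  have hcoef2 : γN 0 * cN n ≤ ρ * γN n :=
    le_trans (le_add_of_nonneg_right (hγpos (n + 1)).le) (hcoef1 n le_rfl)

  set γF : Fin (n + 1) → ℝ := fun k => γN (k : ℕ) with hγF_def
  set K : Fin 2 → ℝ := fun i => |φ0 i| ^ r + (α0 i) ^ (r / 2) * m with hK_def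
  have hK0 : ∀ i, 0 ≤ K i := fun i => add_nonneg (Real.rpow_nonneg (abs_nonneg _) _)
    (mul_nonneg (Real.rpow_nonneg (hα0 i).le _) hm0)
  have hC0 : (0:ℝ) ≤ 1 + γN 0 * (K 0 + K 1) := by
    have := hγpos 0
    have := hK0 0
    have := hK0 1
    nlinarith
  have hr2 : 0 < r / 2 := by linarith
  have hr21 : r / 2 ≤ 1 := by linarith
  refine ⟨γF, fun k => hγpos _, ρ, ⟨hρ_pos, hρ_lt⟩, 1 + γN 0 * (K 0 + K 1), hC0, ?_⟩
  intro y i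
  have hφle : ∀ j, |φ i j| ≤ max |φ 0 j| |φ 1 j| := by
    intro j; fin_cases i
    · exact le_max_left _ _
    · exact le_max_right _ _
  have hαle : ∀ j, α i j ≤ max (α 0 j) (α 1 j) := by
    intro j; fin_cases i
    · exact le_max_left _ _
    · exact le_max_right _ _
  have hKle : K i ≤ K 0 + K 1 := by
    fin_cases i
    · exact le_add_of_nonneg_right (hK0 1)
    · exact le_add_of_nonneg_left (hK0 0)
  set s : ℝ := α0 i + ∑ j, α i j * y j ^ 2 with hs_def
  have hs_pos : 0 < s := add_pos_of_pos_of_nonneg (hα0 i)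
    (Finset.sum_nonneg fun j _ => mul_nonneg (hα i j) (sq_nonneg _))
  set T : Fin (n + 1) → ℝ := fun j => |y j| ^ r with hT_def
  have hT0 : ∀ j, 0 ≤ T j := fun j => Real.rpow_nonneg (abs_nonneg _) r
  set A : ℝ := 1 + γN 0 * (|φ0 i| ^ r + ∑ j, |φ i j| ^ r * T j)
      + ∑ k : Fin n, γN ((k : ℕ) + 1) * T k.castSucc with hA_def
  set E : ℝ := γN 0 * ((α0 i) ^ (r / 2) + ∑ j, (α i j) ^ (r / 2) * T j) with hE_def
  have hE0 : 0 ≤ E := by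
    refine mul_nonneg (hγpos 0).le (add_nonneg (Real.rpow_nonneg (hα0 i).le _) ?_)
    exact Finset.sum_nonneg fun j _ => mul_nonneg (Real.rpow_nonneg (hα i j) _) (hT0 j)
  -- the scalar inequality on the first coordinate
  have hαsum : (0:ℝ) ≤ ∑ j, α i j * y j ^ 2 :=
    Finset.sum_nonneg fun j _ => mul_nonneg (hα i j) (sq_nonneg _)
  have h4 : s ^ (r / 2) ≤ (α0 i) ^ (r / 2) + ∑ j, (α i j) ^ (r / 2) * T j := by
    calc s ^ (r / 2) ≤ (α0 i) ^ (r / 2) + (∑ j, α i j * y j ^ 2) ^ (r / 2) := by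
          rw [hs_def]; exact rpow_add_le_add_rpow' (hα0 i).le hαsum hr2.le hr21
      _ ≤ (α0 i) ^ (r / 2) + ∑ j, (α i j * y j ^ 2) ^ (r / 2) := by
          refine add_le_add_right (sum_rpow_le' _ _ hr2 hr21 fun j _ => ?_) _
          exact mul_nonneg (hα i j) (sq_nonneg _)
      _ = (α0 i) ^ (r / 2) + ∑ j, (α i j) ^ (r / 2) * T j := by
          refine congrArg _ (Finset.sum_congr rfl fun j _ => ?_)
          rw [Real.mul_rpow (hα i j) (sq_nonneg _)]
          congr 1
          rw [hT_def]
          rw [show (y j ^ 2 : ℝ) = |y j| ^ (2:ℕ) by rw [sq_abs], ← Real.rpow_natCast |y j| 2,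
            ← Real.rpow_mul (abs_nonneg _)]
          rw [show ((2:ℕ):ℝ) * (r / 2) = r by push_cast; ring]
  have hscalar : ∀ x : ℝ, |φ0 i + (∑ j, φ i j * y j) + x * Real.sqrt s| ^ r
      ≤ (|φ0 i| ^ r + ∑ j, |φ i j| ^ r * T j)
        + |x| ^ r * ((α0 i) ^ (r / 2) + ∑ j, (α i j) ^ (r / 2) * T j) := by
    intro x
    have h3 : |x * Real.sqrt s| ^ r = |x| ^ r * s ^ (r / 2) := by
      rw [abs_mul, abs_of_nonneg (Real.sqrt_nonneg s),
        Real.mul_rpow (abs_nonneg x) (Real.sqrt_nonneg s), Real.sqrt_eq_rpow,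
        ← Real.rpow_mul hs_pos.le]
      rw [show (1 / (2:ℝ)) * r = r / 2 by ring]
    have h2 : |φ0 i + ∑ j, φ i j * y j| ^ r ≤ |φ0 i| ^ r + ∑ j, |φ i j| ^ r * T j := by
      refine (abs_add_rpow_le' hr0 hr1).trans (add_le_add_right ?_ _)
      refine (abs_sum_rpow_le' Finset.univ _ hr0 hr1).trans (le_of_eq ?_)
      refine Finset.sum_congr rfl fun j _ => ?_
      rw [abs_mul, Real.mul_rpow (abs_nonneg _) (abs_nonneg _)]
    calc |φ0 i + (∑ j, φ i j * y j) + x * Real.sqrt s| ^ r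
        ≤ |φ0 i + ∑ j, φ i j * y j| ^ r + |x * Real.sqrt s| ^ r := abs_add_rpow_le' hr0 hr1
      _ ≤ (|φ0 i| ^ r + ∑ j, |φ i j| ^ r * T j) + |x| ^ r * s ^ (r / 2) := by
          rw [h3]; exact add_le_add_left h2 _
      _ ≤ _ := add_le_add_right (mul_le_mul_of_nonneg_left h4
            (Real.rpow_nonneg (abs_nonneg x) r)) _
  -- pointwise bound on the integrand
  have hptw : ∀ x : ℝ, testV (n + 1) γF r (nextLag (n + 1) (φ0 i) (φ i) (α0 i) (α i) y x)
      ≤ A + E * |x| ^ r := by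
    intro x
    have h0 : nextLag (n + 1) (φ0 i) (φ i) (α0 i) (α i) y x 0
        = φ0 i + (∑ j, φ i j * y j) + x * Real.sqrt s := by
      rw [hs_def]; simp [nextLag]
    have hsucc : ∀ k : Fin n, nextLag (n + 1) (φ0 i) (φ i) (α0 i) (α i) y x k.succ
        = y k.castSucc := by
      intro k
      have hk : ((k.succ : Fin (n + 1)) : ℕ) = (k : ℕ) + 1 := rfl
      simp only [nextLag]
      rw [dif_neg (by omega)]
      congr 1
    unfold testV
    rw [Fin.sum_univ_succ]
    simp only [h0, hsucc]
    have hγF0 : γF 0 = γN 0 := rfl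
    have hγFs : ∀ k : Fin n, γF k.succ = γN ((k : ℕ) + 1) := fun k => rfl
    simp only [hγF0, hγFs]
    have hTs : ∀ k : Fin n, |y k.castSucc| ^ r = T k.castSucc := fun k => rfl
    simp only [hTs]
    have hmulle : γN 0 * |φ0 i + (∑ j, φ i j * y j) + x * Real.sqrt s| ^ r
        ≤ γN 0 * ((|φ0 i| ^ r + ∑ j, |φ i j| ^ r * T j)
          + |x| ^ r * ((α0 i) ^ (r / 2) + ∑ j, (α i j) ^ (r / 2) * T j)) :=
      mul_le_mul_of_nonneg_left (hscalar x) (hγpos 0).le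
    have hEid : γN 0 * ((|φ0 i| ^ r + ∑ j, |φ i j| ^ r * T j)
          + |x| ^ r * ((α0 i) ^ (r / 2) + ∑ j, (α i j) ^ (r / 2) * T j))
        = γN 0 * (|φ0 i| ^ r + ∑ j, |φ i j| ^ r * T j) + E * |x| ^ r := by
      rw [hE_def]; ring
    rw [hA_def]
    linarith [hmulle, hEid.le, hEid.ge]
  -- nonnegativity of the integrand
  have hnonneg : ∀ x : ℝ, 0 ≤ testV (n + 1) γF r (nextLag (n + 1) (φ0 i) (φ i) (α0 i) (α i) y x) := by
    intro x
    unfold testV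
    have : (0:ℝ) ≤ ∑ k, γF k * |nextLag (n + 1) (φ0 i) (φ i) (α0 i) (α i) y x k| ^ r :=
      Finset.sum_nonneg fun k _ => mul_nonneg (hγpos _).le (Real.rpow_nonneg (abs_nonneg _) r)
    linarith
  have hbi : Integrable (fun x => A + E * |x| ^ r) μ := (integrable_const A).add (hmr.const_mul E)
  -- the coefficient comparison
  have hcc : ∀ j : Fin (n + 1), |φ i j| ^ r + (α i j) ^ (r / 2) * m ≤ cN (j : ℕ) := by
    intro j
    have hcNj : cN (j : ℕ) = (max |φ 0 j| |φ 1 j|) ^ r + (max (α 0 j) (α 1 j)) ^ (r / 2) * m := by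
      rw [hcN_def]
      dsimp only
      rw [dif_pos j.isLt]
    rw [hcNj]
    exact add_le_add (Real.rpow_le_rpow (abs_nonneg _) (hφle j) hr0.le)
      (mul_le_mul_of_nonneg_right
        (Real.rpow_le_rpow (hα i j) (hαle j) hr2.le) hm0)
  -- the core sum inequality
  have hcore : ∑ j : Fin (n + 1), γN 0 * (cN (j : ℕ) * T j)
      + ∑ k : Fin n, γN ((k : ℕ) + 1) * T k.castSucc
      ≤ ρ * ∑ j : Fin (n + 1), γN (j : ℕ) * T j := by
    rw [Fin.sum_univ_castSucc (f := fun j : Fin (n+1) => γN 0 * (cN (j : ℕ) * T j)),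
      Fin.sum_univ_castSucc (f := fun j : Fin (n+1) => γN (j : ℕ) * T j)]
    simp only [Fin.coe_castSucc, Fin.val_last]
    rw [mul_add, Finset.mul_sum]
    have hstep : ∀ k : Fin n, γN 0 * (cN (k : ℕ) * T k.castSucc) + γN ((k : ℕ) + 1) * T k.castSucc
        ≤ ρ * (γN (k : ℕ) * T k.castSucc) := by
      intro k
      have h := hcoef1 (k : ℕ) (by omega)
      calc γN 0 * (cN (k : ℕ) * T k.castSucc) + γN ((k : ℕ) + 1) * T k.castSucc
          = (γN 0 * cN (k : ℕ) + γN ((k : ℕ) + 1)) * T k.castSucc := by ring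
        _ ≤ (ρ * γN (k : ℕ)) * T k.castSucc := mul_le_mul_of_nonneg_right h (hT0 _)
        _ = ρ * (γN (k : ℕ) * T k.castSucc) := by ring
    have hlast : γN 0 * (cN n * T (Fin.last n)) ≤ ρ * (γN n * T (Fin.last n)) := by
      calc γN 0 * (cN n * T (Fin.last n)) = (γN 0 * cN n) * T (Fin.last n) := by ring
        _ ≤ (ρ * γN n) * T (Fin.last n) := mul_le_mul_of_nonneg_right hcoef2 (hT0 _)
        _ = ρ * (γN n * T (Fin.last n)) := by ring
    calc (∑ k : Fin n, γN 0 * (cN (k : ℕ) * T k.castSucc)) + γN 0 * (cN n * T (Fin.last n))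
          + ∑ k : Fin n, γN ((k : ℕ) + 1) * T k.castSucc
        = (∑ k : Fin n, (γN 0 * (cN (k : ℕ) * T k.castSucc) + γN ((k : ℕ) + 1) * T k.castSucc))
          + γN 0 * (cN n * T (Fin.last n)) := by
          rw [Finset.sum_add_distrib]; ring
      _ ≤ (∑ k : Fin n, ρ * (γN (k : ℕ) * T k.castSucc)) + ρ * (γN n * T (Fin.last n)) :=
          add_le_add (Finset.sum_le_sum fun k _ => hstep k) hlast
  -- assembling
  have hAEm : A + E * m = 1 + γN 0 * K i
      + (∑ j : Fin (n + 1), γN 0 * ((|φ i j| ^ r + (α i j) ^ (r / 2) * m) * T j)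
        + ∑ k : Fin n, γN ((k : ℕ) + 1) * T k.castSucc) := by
    rw [hA_def, hE_def, hK_def]
    have hexp : γN 0 * (∑ j, |φ i j| ^ r * T j) + γN 0 * (∑ j, (α i j) ^ (r / 2) * T j) * m
        = ∑ j : Fin (n + 1), γN 0 * ((|φ i j| ^ r + (α i j) ^ (r / 2) * m) * T j) := by
      rw [Finset.mul_sum, Finset.mul_sum, Finset.sum_mul, ← Finset.sum_add_distrib]
      exact Finset.sum_congr rfl fun j _ => by ring
    rw [← hexp]
    simp only [hK_def]
    ring
  have hVy : testV (n + 1) γF r y = 1 + ∑ j : Fin (n + 1), γN (j : ℕ) * T j := rfl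
  calc ∫ x, testV (n + 1) γF r (nextLag (n + 1) (φ0 i) (φ i) (α0 i) (α i) y x) ∂μ
      ≤ ∫ x, (A + E * |x| ^ r) ∂μ :=
        integral_mono_of_nonneg (Filter.Eventually.of_forall hnonneg) hbi
          (Filter.Eventually.of_forall hptw)
    _ = A + E * m := by
        rw [integral_add (integrable_const A) (hmr.const_mul E), integral_const,
          integral_const_mul, hm_def]
        simp
    _ ≤ ρ * testV (n + 1) γF r y + (1 + γN 0 * (K 0 + K 1)) := by
        rw [hAEm, hVy]
        have hsum1 : ∑ j : Fin (n + 1), γN 0 * ((|φ i j| ^ r + (α i j) ^ (r / 2) * m) * T j)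
            ≤ ∑ j : Fin (n + 1), γN 0 * (cN (j : ℕ) * T j) :=
          Finset.sum_le_sum fun j _ => mul_le_mul_of_nonneg_left
            (mul_le_mul_of_nonneg_right (hcc j) (hT0 j)) (hγpos 0).le
        have hKi : γN 0 * K i ≤ γN 0 * (K 0 + K 1) :=
          mul_le_mul_of_nonneg_left hKle (hγpos 0).le
        have hrw : ρ * (1 + ∑ j : Fin (n + 1), γN (j : ℕ) * T j)
            = ρ + ρ * ∑ j : Fin (n + 1), γN (j : ℕ) * T j := by ring
        rw [hrw]
        have hfin1 : 1 + γN 0 * K i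
            + (∑ j : Fin (n + 1), γN 0 * ((|φ i j| ^ r + (α i j) ^ (r / 2) * m) * T j)
              + ∑ k : Fin n, γN ((k : ℕ) + 1) * T k.castSucc)
            ≤ 1 + γN 0 * (K 0 + K 1)
            + (∑ j : Fin (n + 1), γN 0 * (cN (j : ℕ) * T j)
              + ∑ k : Fin n, γN ((k : ℕ) + 1) * T k.castSucc) :=
          add_le_add (add_le_add_right hKi 1) (add_le_add_left hsum1 _)
        have hfin2 : 1 + γN 0 * (K 0 + K 1)
            + (∑ j : Fin (n + 1), γN 0 * (cN (j : ℕ) * T j)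
              + ∑ k : Fin n, γN ((k : ℕ) + 1) * T k.castSucc)
            ≤ 1 + γN 0 * (K 0 + K 1) + ρ * ∑ j : Fin (n + 1), γN (j : ℕ) * T j :=
          add_le_add_right hcore _
        refine le_trans (le_trans hfin1 hfin2) ?_
        have h1 : 1 + γN 0 * (K 0 + K 1) + ρ * ∑ j : Fin (n + 1), γN (j : ℕ) * T j
            = (ρ * ∑ j : Fin (n + 1), γN (j : ℕ) * T j) + (1 + γN 0 * (K 0 + K 1)) :=
          add_comm _ _
        rw [h1]
        exact add_le_add_left (le_add_of_nonneg_left hρ_pos.le) _
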